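/- Let p be an odd prime. There exists a sequence (x_i)_{i≥0} of p-adic integers with x_i ∈ pℤ_p for every i ≥ 1, such that for every n ≥ 1 one has ∑_{i=0}^{n} p^i · x_i^{p^{n−i}} = 1 − p^{p^n − 1} in ℤ_p. -/

import Mathlib

open Finset

private lemma pow_big {p : ℕ} (hp3 : 3 ≤ p) : ∀ m : ℕ, 1 ≤ m → m + 2 ≤ p ^ m := by
  intro m hm
  induction m with
  | zero => omega
  | succ k ih =>
    rcases Nat.eq_zero_or_pos k with hk | hk
    · subst hk; simpa using hp3
    · have h1 := ih hk
      have : p ^ (k + 1) = p * p ^ k := by ring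
      have h2 : 3 * (k + 2) ≤ p * p ^ k :=
        Nat.mul_le_mul hp3 h1
      omega

private lemma key {p : ℕ} [Fact p.Prime] (hp3 : 3 ≤ p) (n : ℕ) (f : ℕ → ℤ_[p])
    (h0 : f 0 = 1) (hd : ∀ i, 1 ≤ i → (p : ℤ_[p]) ∣ f i) :
    ∃ c : ℤ_[p],
      1 - (p : ℤ_[p]) ^ (p ^ (n + 1) - 1)
        - ∑ i ∈ Finset.range (n + 1), (p : ℤ_[p]) ^ i * (f i) ^ (p ^ (n + 1 - i))
      = (p : ℤ_[p]) ^ (n + 2) * c := by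
  have hdvd : ((p : ℤ_[p]) ^ (n + 2)) ∣
      (1 - (p : ℤ_[p]) ^ (p ^ (n + 1) - 1)
        - ∑ i ∈ Finset.range (n + 1), (p : ℤ_[p]) ^ i * (f i) ^ (p ^ (n + 1 - i))) := by
    rw [Finset.sum_range_succ']
    have h00 : (p : ℤ_[p]) ^ 0 * (f 0) ^ (p ^ (n + 1 - 0)) = 1 := by
      rw [h0]; simp
    rw [h00]
    have : 1 - (p : ℤ_[p]) ^ (p ^ (n + 1) - 1)
        - (∑ i ∈ Finset.range n, (p : ℤ_[p]) ^ (i + 1) * (f (i + 1)) ^ (p ^ (n + 1 - (i + 1))) + 1)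
      = -((p : ℤ_[p]) ^ (p ^ (n + 1) - 1))
        - ∑ i ∈ Finset.range n, (p : ℤ_[p]) ^ (i + 1) * (f (i + 1)) ^ (p ^ (n + 1 - (i + 1))) := by
      ring
    rw [this]
    apply dvd_sub
    · rw [dvd_neg]
      apply pow_dvd_pow
      have := pow_big hp3 (n + 1) (by omega)
      omega
    · apply Finset.dvd_sum
      intro i hi
      have hi' : i < n := Finset.mem_range.mp hi
      obtain ⟨y, hy⟩ := hd (i + 1) (by omega)
      rw [hy, mul_pow, ← mul_assoc]
      rw [show n + 1 - (i + 1) = n - i from by omega]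
      have hexp : n + 2 ≤ (i + 1) + p ^ (n - i) := by
        have h1 : n - i < p ^ (n - i) := Nat.lt_pow_self (by omega : 1 < p)
        omega
      have : ((p : ℤ_[p]) ^ (n + 2)) ∣ (p : ℤ_[p]) ^ (i + 1) * (p : ℤ_[p]) ^ (p ^ (n - i)) := by
        rw [← pow_add]
        exact pow_dvd_pow _ hexp
      exact Dvd.dvd.mul_right this _
  obtain ⟨c, hc⟩ := hdvd
  exact ⟨c, hc⟩

private noncomputable def F (p : ℕ) [Fact p.Prime] (hp3 : 3 ≤ p) :
    (n : ℕ) → {f : ℕ → ℤ_[p] // f 0 = 1 ∧ (∀ i, 1 ≤ i → (p : ℤ_[p]) ∣ f i) ∧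
      ∀ m, 1 ≤ m → m ≤ n →
        ∑ i ∈ Finset.range (m + 1), (p : ℤ_[p]) ^ i * (f i) ^ (p ^ (m - i)) =
          1 - (p : ℤ_[p]) ^ (p ^ m - 1)}
  | 0 => ⟨fun i => if i = 0 then 1 else 0, by simp,
      fun i hi => by show (p : ℤ_[p]) ∣ if i = 0 then 1 else 0; rw [if_neg (by omega : ¬ i = 0)]; exact dvd_zero _,
      fun m hm hm0 => by omega⟩
  | n + 1 =>
    ⟨Function.update (F p hp3 n).1 (n + 1)
        ((p : ℤ_[p]) * Classical.choose
          (key hp3 n (F p hp3 n).1 (F p hp3 n).2.1 (F p hp3 n).2.2.1)), by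
      obtain ⟨h0, hd, heq⟩ := (F p hp3 n).2
      have hkey := key hp3 n (F p hp3 n).1 (F p hp3 n).2.1 (F p hp3 n).2.2.1
      set z := Classical.choose (key hp3 n (F p hp3 n).1 (F p hp3 n).2.1 (F p hp3 n).2.2.1) with hz
      have hc : 1 - (p : ℤ_[p]) ^ (p ^ (n + 1) - 1)
          - ∑ i ∈ Finset.range (n + 1), (p : ℤ_[p]) ^ i * ((F p hp3 n).1 i) ^ (p ^ (n + 1 - i))
          = (p : ℤ_[p]) ^ (n + 2) * z :=
        Classical.choose_spec (key hp3 n (F p hp3 n).1 (F p hp3 n).2.1 (F p hp3 n).2.2.1)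
      have hagree : ∀ i, i ≤ n →
          Function.update (F p hp3 n).1 (n + 1) ((p : ℤ_[p]) * z) i = (F p hp3 n).1 i := by
        intro i hi
        exact Function.update_of_ne (by omega) _ _
      refine ⟨?_, ?_, ?_⟩
      · rw [hagree 0 (by omega), h0]
      · intro i hi
        rcases eq_or_ne i (n + 1) with h | h
        · rw [h, Function.update_self]
          exact dvd_mul_right _ _
        · rw [Function.update_of_ne h _ _]
          exact hd i hi
      · intro m hm hmn
        rcases Nat.lt_or_ge m (n + 1) with h | h
        · rw [Finset.sum_congr rfl fun i hi => by
            rw [hagree i (by have := Finset.mem_range.mp hi; omega)]]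
          exact heq m hm (by omega)
        · have hm' : m = n + 1 := by omega
          subst hm'
          rw [Finset.sum_range_succ]
          rw [Finset.sum_congr rfl fun i hi => by
            rw [hagree i (by have := Finset.mem_range.mp hi; omega)]]
          rw [Function.update_self]
          rw [show p ^ (n + 1 - (n + 1)) = 1 from by simp, pow_one]
          have : (p : ℤ_[p]) ^ (n + 1) * ((p : ℤ_[p]) * z)
              = (p : ℤ_[p]) ^ (n + 2) * z := by ring
          rw [this, ← hc]
          ring⟩

private lemma F_step (p : ℕ) [Fact p.Prime] (hp3 : 3 ≤ p) (n i : ℕ) (h : i ≤ n) :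
    (F p hp3 (n + 1)).1 i = (F p hp3 n).1 i := by
  conv_lhs => rw [F]
  exact Function.update_of_ne (by omega) _ _

theorem stmt12 (p : ℕ) [Fact p.Prime] (hp : Odd p) :
    ∃ x : ℕ → ℤ_[p],
      (∀ i : ℕ, 1 ≤ i → (p : ℤ_[p]) ∣ x i) ∧
      ∀ n : ℕ, 1 ≤ n →
        ∑ i ∈ Finset.range (n + 1), (p : ℤ_[p]) ^ i * (x i) ^ (p ^ (n - i)) =
          1 - (p : ℤ_[p]) ^ (p ^ n - 1) := by
  have hp2 := (Fact.out : p.Prime).two_le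
  have hodd := Nat.odd_iff.mp hp
  have hp3 : 3 ≤ p := by omega
  have hstep := F_step p hp3
  have hconst : ∀ n m i, i ≤ n → n ≤ m → (F p hp3 m).1 i = (F p hp3 n).1 i := by
    intro n m i hi hnm
    induction m, hnm using Nat.le_induction with
    | base => rfl
    | succ k hk ih => rw [hstep k i (by omega), ih]
  refine ⟨fun i => (F p hp3 i).1 i, ?_, ?_⟩
  · intro i hi
    exact (F p hp3 i).2.2.1 i hi
  · intro n hn
    have heq := (F p hp3 n).2.2.2 n hn le_rfl
    rw [← heq]
    apply Finset.sum_congr rfl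
    intro i hi
    have hi' : i ≤ n := by have := Finset.mem_range.mp hi; omega
    rw [hconst i n i le_rfl hi']
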